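/- Let Γ = ⟨a, b, c | a³ = b² = c² = 1, bab = a², bc = cb⟩ (the amalgam D₃ *_{C₂} D₂ amalgamated over ⟨b⟩). There exists a surjective homomorphism φ : Γ → S₄ whose restrictions to the subgroups ⟨a, b⟩ ≅ D₃ and ⟨b, c⟩ ≅ D₂ are injective; consequently ker(φ) is a torsion-free normal subgroup of Γ of index 24. -/

import Mathlib

/-- The relations of `Γ = ⟨a, b, c | a³ = b² = c² = 1, bab = a², bc = cb⟩ ≅ D₃ *_{C₂} D₂`. -/
def amalgamRels : Set (FreeGroup (Fin 3)) :=
  { (FreeGroup.of 0) ^ 3, (FreeGroup.of 1) ^ 2, (FreeGroup.of 2) ^ 2,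
    FreeGroup.of 1 * FreeGroup.of 0 * FreeGroup.of 1 * ((FreeGroup.of 0) ^ 2)⁻¹,
    FreeGroup.of 1 * FreeGroup.of 2 * (FreeGroup.of 1)⁻¹ * (FreeGroup.of 2)⁻¹ }

/-- A monoid is torsion-free if no nontrivial element has finite order
(the definition `Monoid.IsTorsionFree` of the older Mathlib, since removed). -/
def Monoid.IsTorsionFree (G : Type*) [Monoid G] : Prop :=
  ∀ g : G, g ≠ 1 → ¬IsOfFinOrder g

set_option linter.unusedSectionVars false

open Monoid PushoutI List

namespace AmalgamAux


lemma conj_pow_nat' {K : Type*} [Group K] (u g : K) (k : ℕ) :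
    (u * g * u⁻¹) ^ k = u * g ^ k * u⁻¹ := by
  induction k with
  | zero => group
  | succ k ih => rw [pow_succ, pow_succ, ih]; group

section DihedralLift

variable {K : Type*} [Group K]

lemma pow_mod_helper {x : K} {n : ℕ} (hx : x ^ n = 1) (m : ℕ) : x ^ m = x ^ (m % n) := by
  conv_lhs => rw [← Nat.div_add_mod m n]
  rw [pow_add, pow_mul, hx, one_pow, one_mul]

lemma pow_cast_eq {x : K} {n : ℕ} [NeZero n] (hx : x ^ n = 1) {m m' : ℕ}
    (h : (m : ZMod n) = (m' : ZMod n)) : x ^ m = x ^ m' := by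
  have hmm : m % n = m' % n := (ZMod.natCast_eq_natCast_iff _ _ _).1 h
  rw [pow_mod_helper hx m, pow_mod_helper hx m', hmm]

/-- lift from the dihedral group -/
def dihedralLift (n : ℕ) [NeZero n] (x y : K) (hx : x ^ n = 1) (hy : y * y = 1)
    (hxy : y * x * y = x⁻¹) : DihedralGroup n →* K where
  toFun := fun g => match g with
    | .r i => x ^ i.val
    | .sr i => y * x ^ i.val
  map_one' := by
    show x ^ (0 : ZMod n).val = 1
    simp [ZMod.val_zero]
  map_mul' := by
    have hinv : x⁻¹ = x ^ (n - 1) := by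
      apply inv_eq_of_mul_eq_one_right
      rw [← pow_succ', Nat.sub_add_cancel (Nat.one_le_iff_ne_zero.2 (NeZero.ne n))]
      exact hx
    have hyinv : y⁻¹ = y := inv_eq_of_mul_eq_one_right hy
    have hconj : ∀ k : ℕ, x ^ k * y = y * x ^ ((n - 1) * k) := by
      intro k
      have h1 : y * x ^ k * y = (x⁻¹) ^ k := by
        have hcp := conj_pow_nat' y x k
        rw [hyinv, hxy] at hcp
        exact hcp.symm
      have h2 : (x⁻¹ : K) ^ k = x ^ ((n - 1) * k) := by
        rw [hinv, ← pow_mul]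
      calc x ^ k * y = y * (y * x ^ k * y) := by
            rw [← mul_assoc, ← mul_assoc, hy, one_mul]
        _ = y * x ^ ((n - 1) * k) := by rw [h1, h2]
    have hcast : ∀ i : ZMod n, ((i.val : ℕ) : ZMod n) = i := fun i => by
      rw [ZMod.natCast_val, ZMod.cast_id]
    have hn1 : ((n - 1 : ℕ) : ZMod n) = -1 := by
      have : ((n : ℕ) : ZMod n) = 0 := ZMod.natCast_self n
      rw [Nat.cast_sub (Nat.one_le_iff_ne_zero.2 (NeZero.ne n)), this, Nat.cast_one, zero_sub]
    rintro (i | i) (j | j)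
    · show x ^ (i + j).val = x ^ i.val * x ^ j.val
      rw [← pow_add]
      apply pow_cast_eq hx
      push_cast [hcast]
      ring
    · show y * x ^ (j - i).val = x ^ i.val * (y * x ^ j.val)
      rw [← mul_assoc, hconj, mul_assoc, ← pow_add]
      congr 1
      apply pow_cast_eq hx
      push_cast [hcast, hn1]
      ring
    · show y * x ^ (i + j).val = (y * x ^ i.val) * x ^ j.val
      rw [mul_assoc, ← pow_add]
      congr 1
      apply pow_cast_eq hx
      push_cast [hcast]
      ring
    · show x ^ (j - i).val = (y * x ^ i.val) * (y * x ^ j.val)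
      rw [show (y * x ^ i.val) * (y * x ^ j.val) = y * (x ^ i.val * y) * x ^ j.val from by group,
        hconj, ← mul_assoc, hy, one_mul, ← pow_add]
      apply pow_cast_eq hx
      push_cast [hcast, hn1]
      ring

@[simp] lemma dihedralLift_r {n : ℕ} [NeZero n] (x y : K) (hx : x ^ n = 1) (hy : y * y = 1)
    (hxy : y * x * y = x⁻¹) (i : ZMod n) :
    dihedralLift n x y hx hy hxy (.r i) = x ^ i.val := rfl

@[simp] lemma dihedralLift_sr {n : ℕ} [NeZero n] (x y : K) (hx : x ^ n = 1) (hy : y * y = 1)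
    (hxy : y * x * y = x⁻¹) (i : ZMod n) :
    dihedralLift n x y hx hy hxy (.sr i) = y * x ^ i.val := rfl

/-- the hom from C₂ sending the generator to `y` -/
def c2Lift (y : K) (hy : y * y = 1) : Multiplicative (ZMod 2) →* K where
  toFun := fun h => y ^ (Multiplicative.toAdd h).val
  map_one' := by
    show y ^ (0 : ZMod 2).val = 1
    simp [ZMod.val_zero]
  map_mul' := by
    intro s t
    show y ^ (Multiplicative.toAdd s + Multiplicative.toAdd t).val = _
    have hy2 : y ^ 2 = 1 := by rw [pow_two]; exact hy
    rw [ZMod.val_add, ← pow_mod_helper hy2, pow_add]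

end DihedralLift



variable {ι : Type*} {G : ι → Type*} [∀ i, Group (G i)] {H : Type*} [Group H]
  {φ : ∀ i, H →* G i}

/-- product of a list of letters in the pushout -/
def pl (φ : ∀ i, H →* G i) (l : List (Σ i, G i)) : PushoutI φ :=
  (l.map fun p => PushoutI.of p.1 p.2).prod

@[simp] lemma pl_nil : pl φ [] = 1 := rfl

@[simp] lemma pl_cons (p : Σ i, G i) (l : List (Σ i, G i)) :
    pl φ (p :: l) = PushoutI.of p.1 p.2 * pl φ l := by simp [pl]

lemma pl_append (l₁ l₂ : List (Σ i, G i)) :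
    pl φ (l₁ ++ l₂) = pl φ l₁ * pl φ l₂ := by simp [pl]

lemma pl_flatten_replicate (l : List (Σ i, G i)) (k : ℕ) :
    pl φ (List.flatten (List.replicate k l)) = (pl φ l) ^ k := by
  induction k with
  | zero => simp
  | succ n ih =>
      rw [List.replicate_succ, List.flatten_cons, pl_append, ih, pow_succ']

lemma chain_flatten_replicate {p q : Σ i, G i} {l : List (Σ i, G i)}
    (hl : l.Chain' (fun s t => s.1 ≠ t.1)) (hhead : l.head? = some p)
    (hlast : l.getLast? = some q) (hqp : q.1 ≠ p.1) (k : ℕ) :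
    (List.flatten (List.replicate k l)).Chain' (fun s t => s.1 ≠ t.1) ∧
      (List.flatten (List.replicate k l)).head? = if k = 0 then none else some p := by
  induction k with
  | zero => simp; exact List.isChain_nil
  | succ n ih =>
      rw [List.replicate_succ, List.flatten_cons]
      have hlne : l ≠ [] := by rintro rfl; simp at hhead
      constructor
      · refine List.isChain_append.2 ⟨hl, ih.1, ?_⟩
        intro x hx y hy
        have hx' : x = q := by
          rw [Option.mem_def, hlast] at hx; exact (Option.some.inj hx.symm)
        rcases Nat.eq_zero_or_pos n with rfl | hn
        · simp at hy
        · have hy' : y = p := by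
            rw [Option.mem_def, ih.2, if_neg (Nat.pos_iff_ne_zero.1 hn)] at hy
            exact Option.some.inj hy.symm
          subst hx' hy'
          exact hqp
      · rw [if_neg (Nat.succ_ne_zero n)]
        obtain ⟨u, t, rfl⟩ := List.exists_cons_of_ne_nil hlne
        simpa using hhead

/-- the prod of a word, under ofCoprodI, is `pl` of its list -/
lemma ofCoprodI_word_prod (w : Monoid.CoprodI.Word G) :
    PushoutI.ofCoprodI (φ := φ) w.prod = pl φ w.toList := by
  rw [Monoid.CoprodI.Word.prod, pl, map_list_prod, List.map_map]
  rfl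

lemma infinite_order_of_cyclically_reduced (hφ : ∀ i, Function.Injective (φ i))
    {l : List (Σ i, G i)} {p q : Σ i, G i} (hhead : l.head? = some p)
    (hlast : l.getLast? = some q)
    (hred : ∀ s ∈ l, s.2 ∉ (φ s.1).range)
    (hchain : l.Chain' (fun s t => s.1 ≠ t.1)) (hqp : q.1 ≠ p.1) :
    ¬ IsOfFinOrder (pl φ l) := by
  rw [isOfFinOrder_iff_pow_eq_one]
  rintro ⟨k, hk, h1⟩
  have hCF := chain_flatten_replicate hchain hhead hlast hqp k
  set L := List.flatten (List.replicate k l) with hL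
  have hmemL : ∀ s ∈ L, s ∈ l := by
    intro s hs
    rw [hL, List.mem_flatten] at hs
    obtain ⟨t, ht, hst⟩ := hs
    rw [List.mem_replicate] at ht
    exact ht.2 ▸ hst
  have hw : ∀ s ∈ L, s.2 ≠ 1 := by
    intro s hs h1'
    exact hred s (hmemL s hs) (h1' ▸ (φ s.1).range.one_mem)
  set w : Monoid.CoprodI.Word G := ⟨L, hw, hCF.1⟩ with hwdef
  have hwred : PushoutI.Reduced φ w := fun s hs => hred s (hmemL s hs)
  have hempty : w = Monoid.CoprodI.Word.empty := by
    refine hwred.eq_empty_of_mem_range hφ ?_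
    rw [ofCoprodI_word_prod]
    show pl φ L ∈ _
    rw [hL, pl_flatten_replicate, h1]
    exact ⟨1, map_one _⟩
  have hLnil : L = [] := congrArg Monoid.CoprodI.Word.toList hempty
  rw [hLnil] at hCF
  have := hCF.2
  rw [if_neg (Nat.pos_iff_ne_zero.1 hk)] at this
  simp at this



lemma conj_pow_nat (u g : PushoutI φ) (k : ℕ) : (u * g * u⁻¹) ^ k = u * g ^ k * u⁻¹ := by
  induction k with
  | zero => group
  | succ k ih => rw [pow_succ, pow_succ, ih]; group

lemma conj_aux [Nonempty ι] (hφ : ∀ i, Function.Injective (φ i)) :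
    ∀ (n : ℕ) (l : List (Σ i, G i)), l.length ≤ n →
      (∀ s ∈ l, s.2 ∉ (φ s.1).range) → l.Chain' (fun s t => s.1 ≠ t.1) → ∀ h : H,
      IsOfFinOrder (PushoutI.base φ h * pl φ l) →
      ∃ (x : PushoutI φ) (i : ι) (gi : G i),
        PushoutI.base φ h * pl φ l = x * PushoutI.of i gi * x⁻¹ := by
  intro n
  induction n with
  | zero =>
      intro l hlen _ _ h _
      have : l = [] := List.length_eq_zero_iff.1 (Nat.le_zero.1 hlen)
      subst this
      refine ⟨1, Classical.arbitrary ι, φ _ h, ?_⟩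
      rw [pl_nil, mul_one, PushoutI.of_apply_eq_base]
      group
  | succ n ih =>
      intro l hlen hred hchain h hfin
      rcases l with _ | ⟨⟨i₁, g₁⟩, l'⟩
      · refine ⟨1, Classical.arbitrary ι, φ _ h, ?_⟩
        rw [pl_nil, mul_one, PushoutI.of_apply_eq_base]
        group
      rcases l' with _ | ⟨s₂, t⟩
      · refine ⟨1, i₁, φ i₁ h * g₁, ?_⟩
        rw [map_mul, PushoutI.of_apply_eq_base]
        simp
      · have hlne : (s₂ :: t : List (Σ i, G i)) ≠ [] := List.cons_ne_nil _ _
        have hsplit : (s₂ :: t).dropLast ++ [(s₂ :: t).getLast hlne] = s₂ :: t :=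
          List.dropLast_append_getLast hlne
        set q : Σ i, G i := (s₂ :: t).getLast hlne with hqdef
        set m : List (Σ i, G i) := (s₂ :: t).dropLast with hmdef
        have hredm : ∀ s ∈ m, s.2 ∉ (φ s.1).range := fun s hs =>
          hred s (List.mem_cons_of_mem _ ((List.dropLast_prefix _).subset hs))
        have hchainm : m.Chain' (fun s t => s.1 ≠ t.1) :=
          hchain.tail.infix ⟨[], [q], by rw [List.nil_append, hsplit]; rfl⟩
        have hmlen : m.length = t.length := by
          rw [hmdef, List.length_dropLast]; simp
        have htlen : t.length + 2 ≤ n + 1 := by simpa using hlen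
        have hheadm : ∀ y ∈ m.head?, i₁ ≠ y.1 := by
          intro y hy
          have hyhead : y = s₂ := by
            rcases t with _ | ⟨s₃, t'⟩
            · simp [hmdef] at hy
            · rw [hmdef, List.dropLast_cons₂, List.head?_cons, Option.mem_def] at hy
              exact (Option.some.inj hy).symm ▸ rfl
          subst hyhead
          exact (List.isChain_cons_cons.1 hchain).1
        by_cases hcase : q.1 = i₁
        · -- conjugate by the last letter
          subst hcase
          set u := PushoutI.of (φ := φ) q.1 q.2 with hudef
          set kk := q.2 * φ q.1 h * g₁ with hkk
          have hg' : u * (PushoutI.base φ h * pl φ (⟨q.1, g₁⟩ :: s₂ :: t)) * u⁻¹ =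
              PushoutI.of q.1 kk * pl φ m := by
            have e : PushoutI.of q.1 kk = u * PushoutI.base φ h * PushoutI.of q.1 g₁ := by
              rw [hkk, map_mul, map_mul, PushoutI.of_apply_eq_base]
            rw [pl_cons, ← hsplit, pl_append, e]
            simp only [pl_cons, pl_nil, mul_one]
            rw [← hudef]
            group
          have hfin' : IsOfFinOrder (PushoutI.of q.1 kk * pl φ m) := by
            rw [← hg', isOfFinOrder_iff_pow_eq_one] at *
            obtain ⟨k, hk, h1⟩ := hfin
            exact ⟨k, hk, by rw [conj_pow_nat, h1]; group⟩
          by_cases hk : kk ∈ (φ q.1).range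
          · obtain ⟨h', hh'⟩ := hk
            have e2 : PushoutI.of q.1 kk * pl φ m = PushoutI.base φ h' * pl φ m := by
              rw [← hh', PushoutI.of_apply_eq_base]
            obtain ⟨x, i, gi, hx⟩ := ih m (by omega) hredm hchainm h' (e2 ▸ hfin')
            refine ⟨u⁻¹ * x, i, gi, ?_⟩
            have e3 : PushoutI.base φ h * pl φ (⟨q.1, g₁⟩ :: s₂ :: t) =
                u⁻¹ * (PushoutI.base φ h' * pl φ m) * u := by
              rw [← e2, ← hg']; group
            rw [e3, hx]
            group
          · have hrednew : ∀ s ∈ (⟨q.1, kk⟩ :: m : List (Σ i, G i)), s.2 ∉ (φ s.1).range := by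
              intro s hs
              rcases List.mem_cons.1 hs with rfl | hs'
              · exact hk
              · exact hredm s hs'
            have hchainnew : (⟨q.1, kk⟩ :: m : List (Σ i, G i)).Chain' (fun s t => s.1 ≠ t.1) :=
              List.isChain_cons.2 ⟨hheadm, hchainm⟩
            have e2 : PushoutI.of q.1 kk * pl φ m =
                PushoutI.base φ 1 * pl φ (⟨q.1, kk⟩ :: m) := by
              rw [map_one, one_mul, pl_cons]
            obtain ⟨x, i, gi, hx⟩ := ih (⟨q.1, kk⟩ :: m) (by simp; omega) hrednew hchainnew 1
              (e2 ▸ hfin')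
            refine ⟨u⁻¹ * x, i, gi, ?_⟩
            have e3 : PushoutI.base φ h * pl φ (⟨q.1, g₁⟩ :: s₂ :: t) =
                u⁻¹ * (PushoutI.base φ 1 * pl φ (⟨q.1, kk⟩ :: m)) * u := by
              rw [← e2, ← hg']; group
            rw [e3, hx]
            group
        · -- cyclically reduced: infinite order, contradiction
          exfalso
          have habs : PushoutI.base φ h * pl φ (⟨i₁, g₁⟩ :: s₂ :: t) =
              pl φ (⟨i₁, φ i₁ h * g₁⟩ :: s₂ :: t) := by
            simp only [pl_cons, map_mul, PushoutI.of_apply_eq_base, mul_assoc]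
          rw [habs] at hfin
          refine infinite_order_of_cyclically_reduced hφ
            (l := ⟨i₁, φ i₁ h * g₁⟩ :: s₂ :: t) (p := ⟨i₁, φ i₁ h * g₁⟩) (q := q)
            rfl ?_ ?_ ?_ hcase hfin
          · rw [List.getLast?_cons_cons, hqdef]
            exact (List.getLast?_eq_getLast hlne)
          · intro s hs
            rcases List.mem_cons.1 hs with rfl | hs'
            · rintro ⟨h', hh'⟩
              refine hred ⟨i₁, g₁⟩ List.mem_cons_self ⟨h⁻¹ * h', ?_⟩
              rw [map_mul, map_inv, hh']
              group
            · exact hred s (List.mem_cons_of_mem _ hs')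
          · exact List.isChain_cons.2 ⟨(List.isChain_cons.1 hchain).1, hchain.tail⟩

theorem conj_into_factor [Nonempty ι] (hφ : ∀ i, Function.Injective (φ i))
    {g : PushoutI φ} (hg : IsOfFinOrder g) :
    ∃ (x : PushoutI φ) (i : ι) (gi : G i), g = x * PushoutI.of i gi * x⁻¹ := by
  classical
  obtain ⟨d⟩ := Monoid.PushoutI.NormalWord.transversal_nonempty φ hφ
  set w := (Monoid.PushoutI.NormalWord.equiv (d := d)) g with hw
  have hprod : w.prod = g := (Monoid.PushoutI.NormalWord.equiv (d := d)).left_inv g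
  have hrep : g = PushoutI.base φ w.head * pl φ w.toList := by
    rw [← hprod, PushoutI.NormalWord.prod, ofCoprodI_word_prod]
  have hred : ∀ s ∈ w.toList, s.2 ∉ (φ s.1).range := by
    intro s hs hr
    have hset : s.2 ∈ d.set s.1 := w.normalized s.1 s.2 hs
    have hne : s.2 ≠ 1 := w.toWord.ne_one s hs
    obtain ⟨pq, hpq, huniq⟩ := (d.compl s.1).existsUnique s.2
    have h1 := huniq ⟨⟨s.2, hr⟩, ⟨1, d.one_mem s.1⟩⟩ (by simp)
    have h2 := huniq ⟨⟨1, (φ s.1).range.one_mem⟩, ⟨s.2, hset⟩⟩ (by simp)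
    have := h1.trans h2.symm
    apply hne
    simpa using (congrArg (fun p => (p.2 : G s.1)) this).symm
  obtain ⟨x, i, gi, hx⟩ := conj_aux hφ w.toList.length w.toList le_rfl hred
    w.toWord.chain_ne w.head (hrep ▸ hg)
  exact ⟨x, i, gi, hrep.trans hx⟩





open Monoid

abbrev Gfam (b : Bool) : Type := DihedralGroup (cond b 2 3)

def baseMap (n : ℕ) [NeZero n] : Multiplicative (ZMod 2) →* DihedralGroup n :=
  c2Lift (DihedralGroup.sr 0) (DihedralGroup.sr_mul_self 0)

def φfam : ∀ b : Bool, Multiplicative (ZMod 2) →* Gfam b :=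
  fun b => Bool.rec (motive := fun b => Multiplicative (ZMod 2) →* Gfam b)
    (baseMap 3) (baseMap 2) b

abbrev Amal : Type := PushoutI φfam

lemma φfam_inj : ∀ b, Function.Injective (φfam b) := by
  intro b
  cases b
  · show Function.Injective (baseMap 3)
    decide
  · show Function.Injective (baseMap 2)
    decide

section MkHom

variable {K : Type*} [Group K] (x y z : K)
  (hx : x ^ 3 = 1) (hy : y * y = 1) (hz : z * z = 1)
  (hxy : y * x * y = x⁻¹) (hyz : y * z = z * y)

lemma yzy {K' : Type*} [Group K'] {y' z' : K'} (hy' : y' * y' = 1) (hz' : z' * z' = 1)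
    (hyz' : y' * z' = z' * y') : y' * z' * y' = z'⁻¹ := by
  rw [hyz', mul_assoc, hy', mul_one]
  exact (inv_eq_of_mul_eq_one_right hz').symm

def fFam : ∀ b : Bool, Gfam b →* K :=
  fun b => Bool.rec (motive := fun b => Gfam b →* K)
    (dihedralLift 3 x y hx hy hxy)
    (dihedralLift 2 z y (by rw [pow_two]; exact hz) hy (yzy hy hz hyz)) b

lemma fFam_comp : ∀ b, (fFam x y z hx hy hz hxy hyz b).comp (φfam b) = c2Lift y hy := by
  have hgen : ∀ (n : ℕ) (_ : NeZero n) (w : K) (hw : w ^ n = 1) (hwy : y * w * y = w⁻¹)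
      (h : Multiplicative (ZMod 2)),
      dihedralLift n w y hw hy hwy ((DihedralGroup.sr 0) ^ (Multiplicative.toAdd h).val) =
        y ^ (Multiplicative.toAdd h).val := by
    intro n _ w hw hwy h
    have hv : (Multiplicative.toAdd h).val = 0 ∨ (Multiplicative.toAdd h).val = 1 := by
      have := ZMod.val_lt (Multiplicative.toAdd h)
      omega
    rcases hv with hv | hv <;> rw [hv]
    · simp
    · rw [pow_one, pow_one, dihedralLift_sr]
      simp [ZMod.val_zero]
  intro b
  cases b
  · exact MonoidHom.ext fun h => hgen 3 inferInstance x hx hxy h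
  · exact MonoidHom.ext fun h => hgen 2 inferInstance z (by rw [pow_two]; exact hz) (yzy hy hz hyz) h

def mkHom : Amal →* K :=
  PushoutI.lift (fFam x y z hx hy hz hxy hyz) (c2Lift y hy) (fFam_comp x y z hx hy hz hxy hyz)

@[simp] lemma mkHom_of_false (g : DihedralGroup 3) :
    mkHom x y z hx hy hz hxy hyz (PushoutI.of false g) = dihedralLift 3 x y hx hy hxy g := by
  rw [mkHom, PushoutI.lift_of]
  rfl

@[simp] lemma mkHom_of_true (g : DihedralGroup 2) :
    mkHom x y z hx hy hz hxy hyz (PushoutI.of true g) =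
      dihedralLift 2 z y (by rw [pow_two]; exact hz) hy (yzy hy hz hyz) g := by
  rw [mkHom, PushoutI.lift_of]
  rfl

end MkHom

/-! generators of the amalgam -/

def gA : Amal := PushoutI.of (φ := φfam) false (.r 1)
def gB : Amal := PushoutI.of (φ := φfam) false (.sr 0)
def gC : Amal := PushoutI.of (φ := φfam) true (.r 1)

lemma gB_eq : gB = PushoutI.of (φ := φfam) true (.sr 0) := by
  have h1 : (DihedralGroup.sr 0 : DihedralGroup 3) = φfam false (Multiplicative.ofAdd 1) := by
    decide
  have h2 : (DihedralGroup.sr 0 : DihedralGroup 2) = φfam true (Multiplicative.ofAdd 1) := by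
    decide
  rw [gB, h1, h2, PushoutI.of_apply_eq_base, PushoutI.of_apply_eq_base]

def gens : Fin 3 → Amal := ![gA, gB, gC]

lemma gens_rels : ∀ r ∈ amalgamRels, FreeGroup.lift gens r = 1 := by
  intro r hr
  simp only [amalgamRels, Set.mem_insert_iff, Set.mem_singleton_iff] at hr
  rcases hr with rfl | rfl | rfl | rfl | rfl <;>
    simp only [map_mul, map_pow, map_inv, FreeGroup.lift_apply_of] <;>
    simp only [gens, Matrix.cons_val_zero, Matrix.cons_val_one, Matrix.head_cons,
      Matrix.cons_val_two, Matrix.tail_cons]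
  · rw [gA, ← map_pow, show (DihedralGroup.r 1 : DihedralGroup 3) ^ 3 = 1 by decide, map_one]
  · rw [gB, ← map_pow, show (DihedralGroup.sr 0 : DihedralGroup 3) ^ 2 = 1 by decide, map_one]
  · rw [gC, ← map_pow, show (DihedralGroup.r 1 : DihedralGroup 2) ^ 2 = 1 by decide, map_one]
  · rw [gA, gB, ← map_pow, ← map_inv, ← map_mul, ← map_mul, ← map_mul,
      show DihedralGroup.sr 0 * DihedralGroup.r 1 * DihedralGroup.sr 0 *
        ((DihedralGroup.r 1 : DihedralGroup 3) ^ 2)⁻¹ = 1 by decide, map_one]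
  · rw [gB_eq, gC, ← map_inv, ← map_inv, ← map_mul, ← map_mul, ← map_mul,
      show DihedralGroup.sr 0 * DihedralGroup.r 1 * (DihedralGroup.sr 0)⁻¹ *
        ((DihedralGroup.r 1 : DihedralGroup 2))⁻¹ = 1 by decide, map_one]

def θ : PresentedGroup amalgamRels →* Amal := PresentedGroup.toGroup gens_rels

/-! ### relations in the presented group -/

abbrev Γ : Type := PresentedGroup amalgamRels

def aP : Γ := PresentedGroup.of 0
def bP : Γ := PresentedGroup.of 1
def cP : Γ := PresentedGroup.of 2

lemma relΓ (r : FreeGroup (Fin 3)) (hr : r ∈ amalgamRels) :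
    (PresentedGroup.mk amalgamRels) r = 1 :=
  (QuotientGroup.eq_one_iff r).2 (Subgroup.subset_normalClosure hr)

lemma relA : aP ^ 3 = 1 := by
  have h := relΓ _ (show (FreeGroup.of 0) ^ 3 ∈ amalgamRels from Set.mem_insert _ _)
  rwa [map_pow] at h

lemma relB : bP * bP = 1 := by
  have h := relΓ _ (show (FreeGroup.of 1) ^ 2 ∈ amalgamRels from
    Set.mem_insert_of_mem _ (Set.mem_insert _ _))
  rwa [map_pow, pow_two] at h

lemma relC : cP * cP = 1 := by
  have h := relΓ _ (show (FreeGroup.of 2) ^ 2 ∈ amalgamRels from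
    Set.mem_insert_of_mem _ (Set.mem_insert_of_mem _ (Set.mem_insert _ _)))
  rwa [map_pow, pow_two] at h

lemma relBAB : bP * aP * bP = aP⁻¹ := by
  have h := relΓ _ (show FreeGroup.of 1 * FreeGroup.of 0 * FreeGroup.of 1 *
      ((FreeGroup.of 0) ^ 2)⁻¹ ∈ amalgamRels from
    Set.mem_insert_of_mem _ (Set.mem_insert_of_mem _ (Set.mem_insert_of_mem _
      (Set.mem_insert _ _))))
  rw [map_mul, map_mul, map_mul, map_inv, map_pow] at h
  have h' : bP * aP * bP * (aP ^ 2)⁻¹ = 1 := h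
  have hA2 : aP⁻¹ = aP ^ 2 :=
    inv_eq_of_mul_eq_one_left (by rw [← pow_succ]; exact relA)
  rw [hA2]
  rwa [mul_inv_eq_one] at h'

lemma relBC : bP * cP = cP * bP := by
  have h := relΓ _ (show FreeGroup.of 1 * FreeGroup.of 2 * (FreeGroup.of 1)⁻¹ *
      (FreeGroup.of 2)⁻¹ ∈ amalgamRels from
    Set.mem_insert_of_mem _ (Set.mem_insert_of_mem _ (Set.mem_insert_of_mem _
      (Set.mem_insert_of_mem _ rfl))))
  rw [map_mul, map_mul, map_mul, map_inv, map_inv] at h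
  have h' : bP * cP * bP⁻¹ * cP⁻¹ = 1 := h
  have e : bP * cP = (bP * cP * bP⁻¹ * cP⁻¹) * (cP * bP) := by group
  rw [e, h', one_mul]

def η : Amal →* Γ := mkHom aP bP cP relA relB relC relBAB relBC

lemma η_θ (g : Γ) : η (θ g) = g := by
  have hcomp : η.comp θ = MonoidHom.id Γ := by
    apply PresentedGroup.ext
    intro x
    fin_cases x
    · show η (θ (PresentedGroup.of 0)) = aP
      rw [θ, PresentedGroup.toGroup.of]
      show η gA = aP
      rw [gA, η, mkHom_of_false, dihedralLift_r]
      norm_num [ZMod.val_one]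
    · show η (θ (PresentedGroup.of 1)) = bP
      rw [θ, PresentedGroup.toGroup.of]
      show η gB = bP
      rw [gB, η, mkHom_of_false, dihedralLift_sr]
      norm_num [ZMod.val_zero]
    · show η (θ (PresentedGroup.of 2)) = cP
      rw [θ, PresentedGroup.toGroup.of]
      show η gC = cP
      rw [gC, η, mkHom_of_true, dihedralLift_r]
      norm_num [ZMod.val_one]
  exact DFunLike.congr_fun hcomp g

lemma θ_inj : Function.Injective θ :=
  Function.LeftInverse.injective η_θ

/-! ### the permutations -/

def pA : Equiv.Perm (Fin 4) := ⟨![1,2,0,3], ![2,0,1,3], by decide, by decide⟩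
def pB : Equiv.Perm (Fin 4) := ⟨![2,1,0,3], ![2,1,0,3], by decide, by decide⟩
def pC : Equiv.Perm (Fin 4) := ⟨![2,3,0,1], ![2,3,0,1], by decide, by decide⟩

lemma pf1 : pA ^ 3 = 1 := by decide
lemma pf2 : pB * pB = 1 := by decide
lemma pf3 : pC * pC = 1 := by decide
lemma pf4 : pB * pA * pB = pA⁻¹ := by decide
lemma pf5 : pB * pC = pC * pB := by decide

def ΨA : Amal →* Equiv.Perm (Fin 4) := mkHom pA pB pC pf1 pf2 pf3 pf4 pf5

def φS : Γ →* Equiv.Perm (Fin 4) := ΨA.comp θ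

lemma ΨD3_inj : Function.Injective (dihedralLift 3 pA pB pf1 pf2 pf4) := by decide

lemma ΨD3_ker : ∀ u : DihedralGroup 3, dihedralLift 3 pA pB pf1 pf2 pf4 u = 1 → u = 1 := by
  decide

lemma ΨD2_inj : Function.Injective
    (dihedralLift 2 pC pB (by rw [pow_two]; exact pf3) pf2 (yzy pf2 pf3 pf5)) := by decide

lemma ΨD2_ker : ∀ u : DihedralGroup 2,
    dihedralLift 2 pC pB (by rw [pow_two]; exact pf3) pf2 (yzy pf2 pf3 pf5) u = 1 → u = 1 := by
  decide

lemma φS_a : φS aP = pA := by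
  rw [φS, MonoidHom.comp_apply, aP, θ, PresentedGroup.toGroup.of]
  show ΨA gA = pA
  rw [gA, ΨA, mkHom_of_false, dihedralLift_r]
  norm_num [ZMod.val_one]

lemma φS_b : φS bP = pB := by
  rw [φS, MonoidHom.comp_apply, bP, θ, PresentedGroup.toGroup.of]
  show ΨA gB = pB
  rw [gB, ΨA, mkHom_of_false, dihedralLift_sr]
  norm_num [ZMod.val_zero]

lemma φS_c : φS cP = pC := by
  rw [φS, MonoidHom.comp_apply, cP, θ, PresentedGroup.toGroup.of]
  show ΨA gC = pC
  rw [gC, ΨA, mkHom_of_true, dihedralLift_r]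
  norm_num [ZMod.val_one]

instance : DecidablePred (Equiv.Perm.IsSwap : Equiv.Perm (Fin 4) → Prop) := fun τ =>
  decidable_of_iff (∃ x y, x ≠ y ∧ τ = Equiv.swap x y) Iff.rfl

lemma φS_surj : Function.Surjective φS := by
  have hA : pA ∈ φS.range := ⟨aP, φS_a⟩
  have hB : pB ∈ φS.range := ⟨bP, φS_b⟩
  have hC : pC ∈ φS.range := ⟨cP, φS_c⟩
  rw [← MonoidHom.range_eq_top, eq_top_iff, ← Equiv.Perm.closure_isSwap, Subgroup.closure_le]
  intro σ hσ
  have hσ' : σ.IsSwap := hσ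
  have h6 := (by decide : ∀ τ : Equiv.Perm (Fin 4), τ.IsSwap →
    τ = pB ∨ τ = pB * pC ∨ τ = pA * pB * pA⁻¹ ∨ τ = pA⁻¹ * pB * pA ∨
      τ = pA * (pB * pC) * pA⁻¹ ∨ τ = pA⁻¹ * (pB * pC) * pA) σ hσ'
  rcases h6 with rfl | rfl | rfl | rfl | rfl | rfl
  · exact hB
  · exact mul_mem hB hC
  · exact mul_mem (mul_mem hA hB) (inv_mem hA)
  · exact mul_mem (mul_mem (inv_mem hA) hB) hA
  · exact mul_mem (mul_mem hA (mul_mem hB hC)) (inv_mem hA)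
  · exact mul_mem (mul_mem (inv_mem hA) (mul_mem hB hC)) hA

lemma theta_ab {g : Γ} (hg : g ∈ Subgroup.closure {aP, bP}) :
    θ g ∈ (PushoutI.of (φ := φfam) false).range := by
  have hle : Subgroup.closure {aP, bP} ≤ ((PushoutI.of (φ := φfam) false).range).comap θ := by
    rw [Subgroup.closure_le]
    intro x hx
    simp only [Set.mem_insert_iff, Set.mem_singleton_iff] at hx
    rcases hx with rfl | rfl
    · refine SetLike.mem_coe.2 (Subgroup.mem_comap.2 ?_)
      rw [aP, θ, PresentedGroup.toGroup.of]
      exact ⟨.r 1, rfl⟩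
    · refine SetLike.mem_coe.2 (Subgroup.mem_comap.2 ?_)
      rw [bP, θ, PresentedGroup.toGroup.of]
      exact ⟨.sr 0, rfl⟩
  exact hle hg

lemma theta_bc {g : Γ} (hg : g ∈ Subgroup.closure {bP, cP}) :
    θ g ∈ (PushoutI.of (φ := φfam) true).range := by
  have hle : Subgroup.closure {bP, cP} ≤ ((PushoutI.of (φ := φfam) true).range).comap θ := by
    rw [Subgroup.closure_le]
    intro x hx
    simp only [Set.mem_insert_iff, Set.mem_singleton_iff] at hx
    rcases hx with rfl | rfl
    · refine SetLike.mem_coe.2 (Subgroup.mem_comap.2 ?_)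
      rw [bP, θ, PresentedGroup.toGroup.of]
      rw [show gens 1 = gB from rfl, gB_eq]
      exact ⟨.sr 0, rfl⟩
    · refine SetLike.mem_coe.2 (Subgroup.mem_comap.2 ?_)
      rw [cP, θ, PresentedGroup.toGroup.of]
      exact ⟨.r 1, rfl⟩
  exact hle hg


end AmalgamAux

open AmalgamAux in
/-- There is a surjection `φ : D₃ *_{C₂} D₂ → S₄` injective on the factors `⟨a,b⟩ ≅ D₃`
and `⟨b,c⟩ ≅ D₂`; hence `ker φ` is a torsion-free normal subgroup of index 24. -/
theorem stmt_17 (a b c : PresentedGroup amalgamRels)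
    (ha : a = PresentedGroup.of (rels := amalgamRels) 0)
    (hb : b = PresentedGroup.of (rels := amalgamRels) 1)
    (hc : c = PresentedGroup.of (rels := amalgamRels) 2) :
    ∃ φ : PresentedGroup amalgamRels →* Equiv.Perm (Fin 4),
      Function.Surjective φ ∧
      Set.InjOn φ (Subgroup.closure {a, b} : Subgroup (PresentedGroup amalgamRels)) ∧
      Set.InjOn φ (Subgroup.closure {b, c} : Subgroup (PresentedGroup amalgamRels)) ∧
      Monoid.IsTorsionFree ↥φ.ker ∧ φ.ker.Normal ∧ φ.ker.index = 24 := by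
  subst ha hb hc
  refine ⟨φS, φS_surj, ?_, ?_, ?_, inferInstance, ?_⟩
  · -- injective on ⟨a, b⟩
    intro x hx y hy hxy
    obtain ⟨u, hu⟩ := theta_ab (SetLike.mem_coe.1 hx)
    obtain ⟨v, hv⟩ := theta_ab (SetLike.mem_coe.1 hy)
    have h1 : ΨA (θ x) = ΨA (θ y) := hxy
    rw [← hu, ← hv, ΨA, mkHom_of_false, mkHom_of_false] at h1
    have h2 : u = v := ΨD3_inj h1
    apply θ_inj
    rw [← hu, ← hv, h2]
  · -- injective on ⟨b, c⟩
    intro x hx y hy hxy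
    obtain ⟨u, hu⟩ := theta_bc (SetLike.mem_coe.1 hx)
    obtain ⟨v, hv⟩ := theta_bc (SetLike.mem_coe.1 hy)
    have h1 : ΨA (θ x) = ΨA (θ y) := hxy
    rw [← hu, ← hv, ΨA, mkHom_of_true, mkHom_of_true] at h1
    have h2 : u = v := ΨD2_inj h1
    apply θ_inj
    rw [← hu, ← hv, h2]
  · -- torsion free kernel
    intro g hg1 hfin
    have hford : IsOfFinOrder (θ (g : Γ)) :=
      θ.isOfFinOrder ((φS.ker.subtype).isOfFinOrder hfin)
    obtain ⟨x, i, gi, hx⟩ := conj_into_factor φfam_inj hford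
    have hker : ΨA (θ (g : Γ)) = 1 := g.2
    rw [hx, map_mul, map_mul, map_inv] at hker
    have h1 : ΨA (PushoutI.of i gi) = 1 := by
      have e : ΨA (PushoutI.of i gi) =
          (ΨA x)⁻¹ * (ΨA x * ΨA (PushoutI.of i gi) * (ΨA x)⁻¹) * ΨA x := by group
      rw [e, hker]
      group
    have hgi : PushoutI.of (φ := φfam) i gi = 1 := by
      cases i
      · rw [ΨA, mkHom_of_false] at h1
        rw [ΨD3_ker gi h1, map_one]
      · rw [ΨA, mkHom_of_true] at h1
        rw [ΨD2_ker gi h1, map_one]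
    have h3 : θ (g : Γ) = θ 1 := by
      rw [hx, hgi, map_one, mul_one, mul_inv_cancel]
    exact hg1 (Subtype.ext (θ_inj h3))
  · -- index 24
    rw [Subgroup.index_ker, MonoidHom.range_eq_top.2 φS_surj, Subgroup.card_top,
      Nat.card_eq_fintype_card, Fintype.card_perm, Fintype.card_fin]
    decide
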